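/- The image of the canonical map D → T ⊗_R D, d ↦ 1 ⊗ d, is a closed subset of T ⊗_R D. -/

import Mathlib

open scoped TensorProduct

/-- Let `T` be a commutative topological ring, `R ⊆ T` a closed subring and
`D` a finitely generated projective `R`-module.  Equip `T ⊗[R] D` with its module topology over
`T`.  Then the image of the canonical map `D → T ⊗[R] D`, `d ↦ 1 ⊗ d`, is closed. -/
theorem statement10 (T : Type*) [CommRing T] [TopologicalSpace T] [IsTopologicalRing T]
    (R : Subring T) (hR : IsClosed (R : Set T))
    (D : Type*) [AddCommGroup D] [Module R D] [Module.Finite R D] [Module.Projective R D] :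
    letI : TopologicalSpace (T ⊗[R] D) := moduleTopology T (T ⊗[R] D)
    IsClosed (Set.range (fun d : D => (1 : T) ⊗ₜ[R] d)) := by
  letI : TopologicalSpace (T ⊗[R] D) := moduleTopology T (T ⊗[R] D)
  haveI : IsModuleTopology T (T ⊗[R] D) := ⟨rfl⟩
  obtain ⟨n, f, g, hsurj, hinj, hfg⟩ :=
    Module.Finite.exists_comp_eq_id_of_projective R D
  -- the map φ : T ⊗[R] D → (Fin n → T)
  let ε := TensorProduct.piScalarRight R T T (Fin n)
  let φ : T ⊗[R] D →ₗ[T] (Fin n → T) := ε.toLinearMap ∘ₗ LinearMap.baseChange T g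
  have hφcont : Continuous φ := IsModuleTopology.continuous_of_linearMap φ
  have key : Set.range (fun d : D => (1 : T) ⊗ₜ[R] d)
      = φ ⁻¹' (Set.pi Set.univ fun _ : Fin n => (R : Set T)) := by
    ext x
    constructor
    · rintro ⟨d, rfl⟩
      intro i _
      have : φ ((1 : T) ⊗ₜ[R] d) = fun j => (g d j : T) := by
        show ε ((LinearMap.baseChange T g) ((1 : T) ⊗ₜ[R] d)) = _
        rw [LinearMap.baseChange_tmul]
        rw [TensorProduct.piScalarRight_apply, TensorProduct.piScalarRightHom_tmul]
        funext j
        simp [Subring.smul_def]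
      rw [this]
      exact (g d i).2
    · intro hx
      simp only [Set.mem_pi, Set.mem_univ, forall_true_left, Set.mem_preimage] at hx
      set r : Fin n → R := fun i => ⟨φ x i, hx i⟩ with hr
      have hεr : ε ((1 : T) ⊗ₜ[R] r) = φ x := by
        rw [TensorProduct.piScalarRight_apply, TensorProduct.piScalarRightHom_tmul]
        funext j
        simp [Subring.smul_def, hr]
      have hgx : LinearMap.baseChange T g x = (1 : T) ⊗ₜ[R] r := by
        apply ε.injective
        rw [hεr]; rfl
      refine ⟨f r, ?_⟩
      have hid : (LinearMap.baseChange T f) ((LinearMap.baseChange T g) x) = x := by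
        rw [← LinearMap.comp_apply, ← LinearMap.baseChange_comp, hfg, LinearMap.baseChange_id]
        rfl
      rw [hgx] at hid
      rw [LinearMap.baseChange_tmul] at hid
      exact hid
  rw [key]
  exact (isClosed_set_pi fun i _ => hR).preimage hφcont
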